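/- For every a > 1, every n ≥ 2, and every i with 2 ≤ i ≤ n, the eigenvalues of FᵀF satisfy ξ_{n−1, i−1} ≤ μ_{n,i} ≤ ξ_{n,i}, where ξ_{m,j} = 1 + a² − 2a·cos( jπ/(m+1) ). In particular μ_{n,i} ∈ [(a−1)², (a+1)²] for all 2 ≤ i ≤ n. -/

import Mathlib

open Matrix Real

/-- The lower-bidiagonal matrix `F` with `1` on the diagonal and `−a` on the subdiagonal. -/
def Fmat (a : ℝ) (n : ℕ) : Matrix (Fin n) (Fin n) ℝ :=
  fun i j => if (i : ℕ) = (j : ℕ) then 1 else if (i : ℕ) = (j : ℕ) + 1 then -a else 0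

/-- `ξ_{m,j} = 1 + a² − 2a·cos(jπ/(m+1))`. -/
noncomputable def xiVal (a : ℝ) (m j : ℕ) : ℝ :=
  1 + a ^ 2 - 2 * a * Real.cos (j * Real.pi / (m + 1))

namespace S16


/-- Tridiagonal Toeplitz matrix. -/
noncomputable def Tmat (a : ℝ) (m : ℕ) : Matrix (Fin m) (Fin m) ℝ :=
  fun k l => (if (k : ℕ) = (l : ℕ) then 1 + a ^ 2 else 0)
    + (if (k : ℕ) = (l : ℕ) + 1 then -a else 0)
    + (if (l : ℕ) = (k : ℕ) + 1 then -a else 0)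

lemma tmat_symm (a : ℝ) (m : ℕ) : (Tmat a m)ᵀ = Tmat a m := by
  ext k l
  simp only [Tmat, Matrix.transpose_apply]
  by_cases h : (k : ℕ) = (l : ℕ)
  · simp [h]
  · rw [if_neg h, if_neg (fun hh => h hh.symm)]
    ring

lemma tmat_mulVec (a : ℝ) (m : ℕ) (g : ℕ → ℝ) (hg0 : g 0 = 0) (hgm : g (m + 1) = 0)
    (k : Fin m) :
    (Tmat a m *ᵥ fun l : Fin m => g ((l : ℕ) + 1)) k
      = (1 + a ^ 2) * g ((k : ℕ) + 1) + (-a) * g (k : ℕ) + (-a) * g ((k : ℕ) + 2) := by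
  have hS1 : ∑ l : Fin m, (if (k : ℕ) = (l : ℕ) then 1 + a ^ 2 else 0) * g ((l : ℕ) + 1)
      = (1 + a ^ 2) * g ((k : ℕ) + 1) := by
    rw [Finset.sum_eq_single k]
    · simp
    · intro b _ hb
      rw [if_neg (fun h => hb (Fin.ext h.symm)), zero_mul]
    · simp
  have hS2 : ∑ l : Fin m, (if (k : ℕ) = (l : ℕ) + 1 then -a else 0) * g ((l : ℕ) + 1)
      = (-a) * g (k : ℕ) := by
    by_cases hk : (k : ℕ) = 0
    · rw [Finset.sum_eq_zero, hk, hg0, mul_zero]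
      intro l _
      rw [if_neg (by omega), zero_mul]
    · have hk1 : 1 ≤ (k : ℕ) := by omega
      have hlt : (k : ℕ) - 1 < m := by have := k.isLt; omega
      rw [Finset.sum_eq_single (⟨(k : ℕ) - 1, hlt⟩ : Fin m)]
      · rw [if_pos (show (k : ℕ) = (k : ℕ) - 1 + 1 by omega)]
        show (-a) * g ((k : ℕ) - 1 + 1) = (-a) * g (k : ℕ)
        rw [Nat.sub_add_cancel hk1]
      · intro b _ hb
        rw [if_neg, zero_mul]
        intro h
        exact hb (Fin.ext (show (b : ℕ) = (k : ℕ) - 1 by omega))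
      · simp
  have hS3 : ∑ l : Fin m, (if (l : ℕ) = (k : ℕ) + 1 then -a else 0) * g ((l : ℕ) + 1)
      = (-a) * g ((k : ℕ) + 2) := by
    by_cases hk : (k : ℕ) + 1 < m
    · rw [Finset.sum_eq_single (⟨(k : ℕ) + 1, hk⟩ : Fin m)]
      · simp
      · intro b _ hb
        rw [if_neg, zero_mul]
        intro h
        exact hb (Fin.ext (show (b : ℕ) = (k : ℕ) + 1 by omega))
      · simp
    · have hk2 : (k : ℕ) + 1 = m := by have := k.isLt; omega
      rw [Finset.sum_eq_zero, show (k : ℕ) + 2 = m + 1 by omega, hgm, mul_zero]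
      intro l _
      rw [if_neg (by have := l.isLt; omega), zero_mul]
  calc (Tmat a m *ᵥ fun l : Fin m => g ((l : ℕ) + 1)) k
      = ∑ l : Fin m, ((if (k : ℕ) = (l : ℕ) then 1 + a ^ 2 else 0) * g ((l : ℕ) + 1)
        + (if (k : ℕ) = (l : ℕ) + 1 then -a else 0) * g ((l : ℕ) + 1)
        + (if (l : ℕ) = (k : ℕ) + 1 then -a else 0) * g ((l : ℕ) + 1)) := by
        simp only [Matrix.mulVec, dotProduct, Tmat]
        exact Finset.sum_congr rfl fun l _ => by ring
    _ = _ := by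
        rw [Finset.sum_add_distrib, Finset.sum_add_distrib, hS1, hS2, hS3]

noncomputable def vvec (m : ℕ) (j : Fin m) : Fin m → ℝ :=
  fun k => Real.sin ((((k : ℕ) : ℝ) + 1) * ((((j : ℕ) : ℝ) + 1) * Real.pi / (m + 1)))

lemma sin_rec (θ x : ℝ) :
    Real.sin (x * θ) + Real.sin ((x + 2) * θ) = 2 * Real.cos θ * Real.sin ((x + 1) * θ) := by
  have h1 : x * θ = (x + 1) * θ - θ := by ring
  have h2 : (x + 2) * θ = (x + 1) * θ + θ := by ring
  rw [h1, h2, Real.sin_add, Real.sin_sub]; ring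

lemma tmat_eigen (a : ℝ) (m : ℕ) (j : Fin m) :
    Tmat a m *ᵥ vvec m j = xiVal a m ((j : ℕ) + 1) • vvec m j := by
  have hm : ((m : ℝ) + 1) ≠ 0 := by positivity
  set θ : ℝ := (((j : ℕ) : ℝ) + 1) * Real.pi / (m + 1) with hθ
  set g : ℕ → ℝ := fun t => Real.sin ((t : ℝ) * θ) with hg
  have hveq : vvec m j = fun l : Fin m => g ((l : ℕ) + 1) := by
    funext l
    simp only [vvec, hg]
    push_cast
    congr 1
  have hg0 : g 0 = 0 := by simp [hg]
  have hgm : g (m + 1) = 0 := by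
    have : ((m + 1 : ℕ) : ℝ) * θ = (((j : ℕ) + 1 : ℕ) : ℝ) * Real.pi := by
      rw [hθ]; push_cast; field_simp
    simp only [hg, this, Real.sin_nat_mul_pi]
  funext k
  rw [hveq]
  rw [show (Tmat a m *ᵥ fun l : Fin m => g ((l : ℕ) + 1)) k
      = (1 + a ^ 2) * g ((k : ℕ) + 1) + (-a) * g (k : ℕ) + (-a) * g ((k : ℕ) + 2)
      from tmat_mulVec a m g hg0 hgm k]
  have hrec : g (k : ℕ) + g ((k : ℕ) + 2) = 2 * Real.cos θ * g ((k : ℕ) + 1) := by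
    have := sin_rec θ ((k : ℕ) : ℝ)
    simp only [hg]
    push_cast
    convert this using 3 <;> push_cast <;> ring
  have hxi : xiVal a m ((j : ℕ) + 1) = 1 + a ^ 2 - 2 * a * Real.cos θ := by
    simp only [xiVal, hθ]
    push_cast
    ring_nf
  rw [Pi.smul_apply, smul_eq_mul, hxi]
  linear_combination (-a) * hrec

lemma xi_lt (a : ℝ) (ha : 0 < a) (m p q : ℕ) (hp : 1 ≤ p) (hq : q ≤ m) (hpq : p < q) :
    xiVal a m p < xiVal a m q := by
  have hm1 : (0 : ℝ) < (m : ℝ) + 1 := by positivity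
  have hqm : (q : ℝ) ≤ (m : ℝ) := by exact_mod_cast hq
  have hpq' : (p : ℝ) < (q : ℝ) := by exact_mod_cast hpq
  have harg1 : (0 : ℝ) ≤ (p : ℝ) * Real.pi / ((m : ℝ) + 1) := by positivity
  have harg2 : (q : ℝ) * Real.pi / ((m : ℝ) + 1) ≤ Real.pi := by
    rw [div_le_iff₀ hm1]
    nlinarith [Real.pi_pos]
  have hlt : (p : ℝ) * Real.pi / ((m : ℝ) + 1) < (q : ℝ) * Real.pi / ((m : ℝ) + 1) := by
    rw [div_lt_div_iff₀ hm1 hm1]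
    exact mul_lt_mul_of_pos_right (mul_lt_mul_of_pos_right hpq' Real.pi_pos) hm1
  have hcos := Real.cos_lt_cos_of_nonneg_of_le_pi harg1 harg2 hlt
  simp only [xiVal]
  nlinarith [hcos]

lemma xi_le (a : ℝ) (ha : 0 < a) (m p q : ℕ) (hp : 1 ≤ p) (hq : q ≤ m) (hpq : p ≤ q) :
    xiVal a m p ≤ xiVal a m q := by
  rcases eq_or_lt_of_le hpq with h | h
  · rw [h]
  · exact (xi_lt a ha m p q hp hq h).le



-- generic quadratic form bounds on spans of orthogonal eigenvectors
lemma sum_smul_dot {ι : Type*} {m : ℕ} (s : Finset ι) (y : ι → ℝ) (w : ι → Fin m → ℝ)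
    (v : Fin m → ℝ) : (∑ i ∈ s, y i • w i) ⬝ᵥ v = ∑ i ∈ s, y i * (w i ⬝ᵥ v) := by
  simp only [dotProduct, Finset.sum_apply, Pi.smul_apply, smul_eq_mul,
    Finset.sum_mul, Finset.mul_sum]
  rw [Finset.sum_comm]
  exact Finset.sum_congr rfl fun i _ => Finset.sum_congr rfl fun t _ => by ring

lemma dot_sum_smul {ι : Type*} {m : ℕ} (s : Finset ι) (y : ι → ℝ) (w : ι → Fin m → ℝ)
    (v : Fin m → ℝ) : v ⬝ᵥ (∑ i ∈ s, y i • w i) = ∑ i ∈ s, y i * (v ⬝ᵥ w i) := by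
  simp only [dotProduct, Finset.sum_apply, Pi.smul_apply, smul_eq_mul,
    Finset.sum_mul, Finset.mul_sum]
  rw [Finset.sum_comm]
  exact Finset.sum_congr rfl fun i _ => Finset.sum_congr rfl fun t _ => by ring

lemma key_dot {ι : Type*} [Fintype ι] {m : ℕ} (y z : ι → ℝ) (w : ι → Fin m → ℝ)
    (horth : ∀ i j, i ≠ j → w i ⬝ᵥ w j = 0) :
    (∑ i, y i • w i) ⬝ᵥ (∑ j, z j • w j) = ∑ i, y i * z i * (w i ⬝ᵥ w i) := by
  rw [sum_smul_dot]
  refine Finset.sum_congr rfl fun i _ => ?_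
  rw [dot_sum_smul]
  rw [Finset.sum_eq_single (s := Finset.univ) i]
  · ring
  · intro b _ hb
    rw [horth i b (Ne.symm hb), mul_zero]
  · simp

lemma quad_le {n : ℕ} {ι : Type*} [Fintype ι] (M : Matrix (Fin n) (Fin n) ℝ)
    (w : ι → (Fin n → ℝ)) (lam : ι → ℝ) (c : ℝ)
    (heig : ∀ i, M *ᵥ w i = lam i • w i)
    (horth : ∀ i j, i ≠ j → w i ⬝ᵥ w j = 0)
    (hle : ∀ i, lam i ≤ c)
    (x : Fin n → ℝ) (hx : x ∈ Submodule.span ℝ (Set.range w)) :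
    x ⬝ᵥ (M *ᵥ x) ≤ c * (x ⬝ᵥ x) := by
  obtain ⟨d, rfl⟩ := (Submodule.mem_span_range_iff_exists_fun ℝ).1 hx
  have hMx : M *ᵥ (∑ i, d i • w i) = ∑ i, (d i * lam i) • w i := by
    rw [show M *ᵥ (∑ i, d i • w i) = M.mulVecLin (∑ i, d i • w i) from rfl]
    rw [map_sum]
    refine Finset.sum_congr rfl fun i _ => ?_
    rw [LinearMap.map_smul, Matrix.mulVecLin_apply, heig i, smul_smul]
  rw [hMx, key_dot _ _ _ horth, key_dot _ _ _ horth, Finset.mul_sum]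
  refine Finset.sum_le_sum fun i _ => ?_
  have hq : (0 : ℝ) ≤ w i ⬝ᵥ w i := by
    simp only [dotProduct]
    exact Finset.sum_nonneg fun t _ => mul_self_nonneg _
  nlinarith [hle i, sq_nonneg (d i), mul_nonneg (mul_self_nonneg (d i)) hq]

lemma quad_ge {n : ℕ} {ι : Type*} [Fintype ι] (M : Matrix (Fin n) (Fin n) ℝ)
    (w : ι → (Fin n → ℝ)) (lam : ι → ℝ) (c : ℝ)
    (heig : ∀ i, M *ᵥ w i = lam i • w i)
    (horth : ∀ i j, i ≠ j → w i ⬝ᵥ w j = 0)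
    (hge : ∀ i, c ≤ lam i)
    (x : Fin n → ℝ) (hx : x ∈ Submodule.span ℝ (Set.range w)) :
    c * (x ⬝ᵥ x) ≤ x ⬝ᵥ (M *ᵥ x) := by
  have := quad_le (-M) w (fun i => -lam i) (-c)
    (fun i => by rw [Matrix.neg_mulVec, heig i, neg_smul]) horth
    (fun i => neg_le_neg (hge i)) x hx
  rw [Matrix.neg_mulVec, dotProduct_neg] at this
  linarith

lemma lin_indep {n : ℕ} {ι : Type*} [Fintype ι] (w : ι → (Fin n → ℝ))
    (horth : ∀ i j, i ≠ j → w i ⬝ᵥ w j = 0) (hnz : ∀ i, w i ⬝ᵥ w i ≠ 0) :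
    LinearIndependent ℝ w := by
  rw [linearIndependent_iff']
  intro s g hsum i hi
  have h1 : w i ⬝ᵥ (∑ j ∈ s, g j • w j) = g i * (w i ⬝ᵥ w i) := by
    rw [dot_sum_smul]
    rw [Finset.sum_eq_single_of_mem i hi]
    intro b _ hbi
    rw [horth i b (Ne.symm hbi), mul_zero]
  rw [hsum] at h1
  simp only [dotProduct_zero] at h1
  rcases mul_eq_zero.1 h1.symm with h | h
  · exact h
  · exact absurd h (hnz i)

lemma finrank_span_orth {n : ℕ} {ι : Type*} [Fintype ι] (w : ι → (Fin n → ℝ))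
    (horth : ∀ i j, i ≠ j → w i ⬝ᵥ w j = 0) (hnz : ∀ i, w i ⬝ᵥ w i ≠ 0) :
    Module.finrank ℝ (Submodule.span ℝ (Set.range w)) = Fintype.card ι :=
  finrank_span_eq_card (lin_indep w horth hnz)

lemma exists_inter {n : ℕ} (U W : Submodule ℝ (Fin n → ℝ))
    (h : n < Module.finrank ℝ U + Module.finrank ℝ W) :
    ∃ x : Fin n → ℝ, x ∈ U ∧ x ∈ W ∧ x ≠ 0 := by
  have h1 := Submodule.finrank_sup_add_finrank_inf_eq U W
  have h2 : Module.finrank ℝ ↥(U ⊔ W) ≤ n := by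
    have := Submodule.finrank_le (U ⊔ W)
    rwa [Module.finrank_fin_fun] at this
  have h3 : 0 < Module.finrank ℝ ↥(U ⊓ W) := by omega
  have h4 : U ⊓ W ≠ ⊥ := by
    intro hbot
    rw [hbot, finrank_bot] at h3
    exact lt_irrefl 0 h3
  obtain ⟨x, hx, hx0⟩ := Submodule.exists_mem_ne_zero_of_ne_bot h4
  exact ⟨x, hx.1, hx.2, hx0⟩

def equivIci (m c : ℕ) : {j : Fin m // c ≤ ((j : Fin m) : ℕ)} ≃ Fin (m - c) where
  toFun j := ⟨((j : Fin m) : ℕ) - c, by have := (j : Fin m).isLt; have := j.2; omega⟩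
  invFun i := ⟨⟨(i : ℕ) + c, by have := i.isLt; omega⟩, by simp⟩
  left_inv j := by
    ext
    show ((j : Fin m) : ℕ) - c + c = ((j : Fin m) : ℕ)
    have := j.2; omega
  right_inv i := by
    ext
    show (i : ℕ) + c - c = (i : ℕ)
    omega

def equivIic (m c : ℕ) (h : c < m) : {j : Fin m // ((j : Fin m) : ℕ) ≤ c} ≃ Fin (c + 1) where
  toFun j := ⟨((j : Fin m) : ℕ), by have := j.2; omega⟩
  invFun i := ⟨⟨(i : ℕ), by have := i.isLt; omega⟩, by
    show (i : ℕ) ≤ c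
    have := i.isLt; omega⟩
  left_inv j := by ext; rfl
  right_inv i := by ext; rfl

lemma fmat_split (a : ℝ) (n : ℕ) (k i : Fin n) :
    Fmat a n k i = (if (k : ℕ) = (i : ℕ) then 1 else 0)
      + (if (k : ℕ) = (i : ℕ) + 1 then -a else 0) := by
  simp only [Fmat]
  split_ifs with h1 h2 <;> first | ring1 | (exfalso; omega)

lemma ftf (a : ℝ) (n : ℕ) (i j : Fin n) :
    ((Fmat a n)ᵀ * Fmat a n) i j
      = Tmat a n i j - (if (i : ℕ) = n - 1 ∧ (j : ℕ) = n - 1 then a ^ 2 else 0) := by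
  have hi := i.isLt
  have hj := j.isLt
  have hsum1 : ∑ k : Fin n, (if (k : ℕ) = (i : ℕ) then (1:ℝ) else 0)
      * (if (k : ℕ) = (j : ℕ) then 1 else 0) = if (i : ℕ) = (j : ℕ) then 1 else 0 := by
    rw [Finset.sum_eq_single i]
    · simp
    · intro b _ hb
      rw [if_neg (fun h => hb (Fin.ext h)), zero_mul]
    · simp
  have hsum2 : ∑ k : Fin n, (if (k : ℕ) = (i : ℕ) then (1:ℝ) else 0)
      * (if (k : ℕ) = (j : ℕ) + 1 then -a else 0)
      = if (i : ℕ) = (j : ℕ) + 1 then -a else 0 := by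
    rw [Finset.sum_eq_single i]
    · simp
    · intro b _ hb
      rw [if_neg (fun h => hb (Fin.ext h)), zero_mul]
    · simp
  have hsum3 : ∑ k : Fin n, (if (k : ℕ) = (i : ℕ) + 1 then -a else 0)
      * (if (k : ℕ) = (j : ℕ) then (1:ℝ) else 0)
      = if (j : ℕ) = (i : ℕ) + 1 then -a else 0 := by
    rw [Finset.sum_eq_single j]
    · simp
    · intro b _ hb
      rw [if_neg (fun h => hb (Fin.ext h)), mul_zero]
    · simp
  have hsum4 : ∑ k : Fin n, (if (k : ℕ) = (i : ℕ) + 1 then -a else 0)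
      * (if (k : ℕ) = (j : ℕ) + 1 then -a else 0)
      = if (i : ℕ) = (j : ℕ) ∧ (i : ℕ) + 1 < n then a ^ 2 else 0 := by
    by_cases hc : (i : ℕ) = (j : ℕ) ∧ (i : ℕ) + 1 < n
    · rw [if_pos hc, Finset.sum_eq_single (⟨(i : ℕ) + 1, hc.2⟩ : Fin n)]
      · rw [if_pos rfl, if_pos (by show (i:ℕ)+1 = (j:ℕ)+1; omega)]
        ring
      · intro b _ hb
        by_cases hb1 : (b : ℕ) = (i : ℕ) + 1
        · exact absurd (Fin.ext (show (b:ℕ) = (i:ℕ)+1 from hb1)) hb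
        · rw [if_neg hb1, zero_mul]
      · simp
    · rw [if_neg hc, Finset.sum_eq_zero]
      intro k _
      by_cases h1 : (k : ℕ) = (i : ℕ) + 1
      · rw [if_neg (show ¬(k : ℕ) = (j : ℕ) + 1 by have := k.isLt; omega), mul_zero]
      · rw [if_neg h1, zero_mul]
  calc ((Fmat a n)ᵀ * Fmat a n) i j
      = ∑ k : Fin n, ((if (k : ℕ) = (i : ℕ) then (1:ℝ) else 0)
          * (if (k : ℕ) = (j : ℕ) then 1 else 0)
        + (if (k : ℕ) = (i : ℕ) then (1:ℝ) else 0)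
          * (if (k : ℕ) = (j : ℕ) + 1 then -a else 0)
        + (if (k : ℕ) = (i : ℕ) + 1 then -a else 0)
          * (if (k : ℕ) = (j : ℕ) then (1:ℝ) else 0)
        + (if (k : ℕ) = (i : ℕ) + 1 then -a else 0)
          * (if (k : ℕ) = (j : ℕ) + 1 then -a else 0)) := by
        rw [Matrix.mul_apply]
        refine Finset.sum_congr rfl fun k _ => ?_
        rw [Matrix.transpose_apply, fmat_split, fmat_split]
        ring
    _ = _ := by
        rw [Finset.sum_add_distrib, Finset.sum_add_distrib, Finset.sum_add_distrib,
          hsum1, hsum2, hsum3, hsum4]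
        simp only [Tmat]
        split_ifs <;> first | ring1 | (exfalso; omega)



def pad {m : ℕ} (x : Fin m → ℝ) : ℕ → ℝ := fun i => if h : i < m then x ⟨i, h⟩ else 0

def padA {m : ℕ} (A : Matrix (Fin m) (Fin m) ℝ) : ℕ → ℕ → ℝ :=
  fun i j => if h : i < m ∧ j < m then A ⟨i, h.1⟩ ⟨j, h.2⟩ else 0

lemma dot_eq_range {m : ℕ} (x z : Fin m → ℝ) :
    x ⬝ᵥ z = ∑ i ∈ Finset.range m, pad x i * pad z i := by
  rw [← Fin.sum_univ_eq_sum_range (fun i => pad x i * pad z i) m]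
  refine Finset.sum_congr rfl fun i _ => ?_
  simp [pad, i.isLt]

lemma quad_eq_range {m : ℕ} (A : Matrix (Fin m) (Fin m) ℝ) (x : Fin m → ℝ) :
    x ⬝ᵥ (A *ᵥ x) = ∑ i ∈ Finset.range m, ∑ j ∈ Finset.range m,
      pad x i * padA A i j * pad x j := by
  have h1 : x ⬝ᵥ (A *ᵥ x) = ∑ i : Fin m, ∑ j : Fin m, x i * A i j * x j := by
    simp only [dotProduct, Matrix.mulVec, Finset.mul_sum]
    exact Finset.sum_congr rfl fun i _ => Finset.sum_congr rfl fun j _ => by ring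
  rw [h1, ← Fin.sum_univ_eq_sum_range
    (fun i => ∑ j ∈ Finset.range m, pad x i * padA A i j * pad x j) m]
  refine Finset.sum_congr rfl fun i _ => ?_
  rw [← Fin.sum_univ_eq_sum_range (fun j => pad x (i : ℕ) * padA A (i : ℕ) j * pad x j) m]
  refine Finset.sum_congr rfl fun j _ => ?_
  simp [pad, padA, i.isLt, j.isLt]

lemma range_shrink {m m' : ℕ} (hm : m' ≤ m) (p : ℕ → ℝ) (B : ℕ → ℕ → ℝ)
    (hp : ∀ i, m' ≤ i → p i = 0) :
    ∑ i ∈ Finset.range m, ∑ j ∈ Finset.range m, p i * B i j * p j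
      = ∑ i ∈ Finset.range m', ∑ j ∈ Finset.range m', p i * B i j * p j := by
  rw [← Finset.sum_subset (Finset.range_subset_range.2 hm)
    (fun i _ hi => by
      rw [hp i (by simpa using hi)]
      exact Finset.sum_eq_zero fun j _ => by ring)]
  refine Finset.sum_congr rfl fun i _ => ?_
  exact (Finset.sum_subset (Finset.range_subset_range.2 hm)
    (fun j _ hj => by rw [hp j (by simpa using hj)]; ring)).symm

lemma range_shrink1 {m m' : ℕ} (hm : m' ≤ m) (p q : ℕ → ℝ)
    (hp : ∀ i, m' ≤ i → p i = 0) :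
    ∑ i ∈ Finset.range m, p i * q i = ∑ i ∈ Finset.range m', p i * q i :=
  (Finset.sum_subset (Finset.range_subset_range.2 hm)
    (fun i _ hi => by rw [hp i (by simpa using hi)]; ring)).symm

/-- extension of a vector on `Fin (n-1)` by zero -/
def ext0 {n : ℕ} (y : Fin (n - 1) → ℝ) : Fin n → ℝ :=
  fun i => if h : (i : ℕ) < n - 1 then y ⟨(i : ℕ), h⟩ else 0

lemma pad_ext0 {n : ℕ} (hn : 1 ≤ n) (y : Fin (n - 1) → ℝ) (i : ℕ) :
    pad (ext0 (n := n) y) i = pad y i := by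
  by_cases h1 : i < n - 1
  · rw [pad, dif_pos (by omega : i < n), pad, dif_pos h1]
    simp [ext0, h1]
  · by_cases h2 : i < n
    · rw [pad, dif_pos h2, pad, dif_neg h1]
      simp [ext0, h1]
    · rw [pad, dif_neg h2, pad, dif_neg (by omega)]

lemma ext0_vanish {n : ℕ} (y : Fin (n - 1) → ℝ) (i : ℕ) (hi : n - 1 ≤ i) :
    pad (ext0 (n := n) y) i = 0 := by
  by_cases h2 : i < n
  · rw [pad, dif_pos h2]
    simp only [ext0]
    rw [dif_neg (by omega)]
  · rw [pad, dif_neg h2]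

lemma dot_ext0 {n : ℕ} (hn : 1 ≤ n) (y z : Fin (n - 1) → ℝ) :
    ext0 (n := n) y ⬝ᵥ ext0 (n := n) z = y ⬝ᵥ z := by
  rw [dot_eq_range, dot_eq_range]
  rw [range_shrink1 (by omega : n - 1 ≤ n) _ _ (fun i hi => ext0_vanish y i hi)]
  exact Finset.sum_congr rfl fun i _ => by rw [pad_ext0 hn, pad_ext0 hn]



-- ### remaining lemmas

lemma vvec_selfdot_pos (m : ℕ) (j : Fin m) : 0 < vvec m j ⬝ᵥ vvec m j := by
  have hm : 0 < m := lt_of_le_of_lt (Nat.zero_le _) j.isLt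
  have hm1 : (0 : ℝ) < (m : ℝ) + 1 := by positivity
  set z : Fin m := ⟨0, hm⟩ with hzdef
  have hθpos : 0 < (((j : ℕ) : ℝ) + 1) * Real.pi / ((m : ℝ) + 1) := by positivity
  have hθlt : (((j : ℕ) : ℝ) + 1) * Real.pi / ((m : ℝ) + 1) < Real.pi := by
    rw [div_lt_iff₀ hm1]
    have hj : ((j : ℕ) : ℝ) + 1 ≤ (m : ℝ) := by
      have := j.isLt
      exact_mod_cast Nat.succ_le_of_lt this
    nlinarith [Real.pi_pos]
  have hz : vvec m j z = Real.sin ((((j : ℕ) : ℝ) + 1) * Real.pi / ((m : ℝ) + 1)) := by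
    simp [vvec, hzdef]
  have hs : 0 < vvec m j z := by
    rw [hz]
    exact Real.sin_pos_of_pos_of_lt_pi hθpos hθlt
  have hle : vvec m j z * vvec m j z ≤ vvec m j ⬝ᵥ vvec m j := by
    simp only [dotProduct]
    exact Finset.single_le_sum (f := fun t => vvec m j t * vvec m j t)
      (fun t _ => mul_self_nonneg _) (Finset.mem_univ z)
  nlinarith

lemma vvec_orth (a : ℝ) (ha : 0 < a) (m : ℕ) (i j : Fin m) (hij : i ≠ j) :
    vvec m i ⬝ᵥ vvec m j = 0 := by
  have hsym : (Tmat a m *ᵥ vvec m i) ⬝ᵥ vvec m j = vvec m i ⬝ᵥ (Tmat a m *ᵥ vvec m j) := by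
    rw [Matrix.dotProduct_mulVec, ← Matrix.mulVec_transpose, tmat_symm]
  have l1 : (Tmat a m *ᵥ vvec m i) ⬝ᵥ vvec m j
      = xiVal a m ((i : ℕ) + 1) * (vvec m i ⬝ᵥ vvec m j) := by
    rw [tmat_eigen, smul_dotProduct, smul_eq_mul]
  have l2 : vvec m i ⬝ᵥ (Tmat a m *ᵥ vvec m j)
      = xiVal a m ((j : ℕ) + 1) * (vvec m i ⬝ᵥ vvec m j) := by
    rw [tmat_eigen, dotProduct_smul, smul_eq_mul]
  have e1 : (xiVal a m ((i : ℕ) + 1) - xiVal a m ((j : ℕ) + 1))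
      * (vvec m i ⬝ᵥ vvec m j) = 0 := by
    rw [l1, l2] at hsym
    linarith
  have hne : xiVal a m ((i : ℕ) + 1) - xiVal a m ((j : ℕ) + 1) ≠ 0 := by
    rcases Nat.lt_or_ge (i : ℕ) (j : ℕ) with h | h
    · have := xi_lt a ha m ((i : ℕ) + 1) ((j : ℕ) + 1) (by omega)
        (by have := j.isLt; omega) (by omega)
      linarith
    · have hji : (j : ℕ) < (i : ℕ) := by
        rcases Nat.lt_or_ge (j : ℕ) (i : ℕ) with h' | h'
        · exact h'
        · exact absurd (Fin.ext (le_antisymm h h')).symm hij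
      have := xi_lt a ha m ((j : ℕ) + 1) ((i : ℕ) + 1) (by omega)
        (by have := i.isLt; omega) (by omega)
      linarith
  rcases mul_eq_zero.1 e1 with h | h
  · exact absurd h hne
  · exact h

lemma quad_M_le_T (a : ℝ) (n : ℕ) (hn : 1 ≤ n) (x : Fin n → ℝ) :
    x ⬝ᵥ (((Fmat a n)ᵀ * Fmat a n) *ᵥ x) ≤ x ⬝ᵥ (Tmat a n *ᵥ x) := by
  set l : Fin n := ⟨n - 1, by omega⟩ with hl
  have hinner : ∀ i : Fin n, (∑ j : Fin n,
      (if (i : ℕ) = n - 1 ∧ (j : ℕ) = n - 1 then a ^ 2 else 0) * x j)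
      = if (i : ℕ) = n - 1 then a ^ 2 * x l else 0 := by
    intro i
    by_cases hi : (i : ℕ) = n - 1
    · rw [if_pos hi, Finset.sum_eq_single l]
      · rw [if_pos ⟨hi, rfl⟩]
      · intro b _ hb
        rw [if_neg, zero_mul]
        intro hcon
        exact hb (Fin.ext hcon.2)
      · simp
    · rw [if_neg hi, Finset.sum_eq_zero]
      intro j _
      rw [if_neg (fun hcon => hi hcon.1), zero_mul]
  have hmain : x ⬝ᵥ (Tmat a n *ᵥ x) - x ⬝ᵥ (((Fmat a n)ᵀ * Fmat a n) *ᵥ x)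
      = x l * (a ^ 2 * x l) := by
    simp only [dotProduct, Matrix.mulVec]
    rw [← Finset.sum_sub_distrib]
    rw [Finset.sum_eq_single l]
    · have := hinner l
      rw [if_pos (show ((l : Fin n) : ℕ) = n - 1 from rfl)] at this
      rw [← mul_sub, ← Finset.sum_sub_distrib, ← this]
      congr 1
      refine Finset.sum_congr rfl fun j _ => ?_
      rw [ftf]
      ring
    · intro b _ hb
      have := hinner b
      rw [if_neg (fun hcon => hb (Fin.ext hcon))] at this
      rw [← mul_sub, ← Finset.sum_sub_distrib]
      rw [show (∑ j : Fin n, (Tmat a n b j * x j - ((Fmat a n)ᵀ * Fmat a n) b j * x j))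
          = ∑ j : Fin n, (if (b : ℕ) = n - 1 ∧ (j : ℕ) = n - 1 then a ^ 2 else 0) * x j
          from Finset.sum_congr rfl fun j _ => by rw [ftf]; ring]
      rw [this, mul_zero]
    · simp
  nlinarith [sq_nonneg (x l), sq_nonneg a, mul_self_nonneg (a * x l)]

lemma ext0_sum_smul {n : ℕ} {ι : Type*} [Fintype ι] (d : ι → ℝ)
    (v : ι → Fin (n - 1) → ℝ) :
    ext0 (n := n) (∑ j, d j • v j) = ∑ j, d j • ext0 (n := n) (v j) := by
  funext i
  by_cases h : (i : ℕ) < n - 1 <;>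
    simp [ext0, h, Finset.sum_apply]

lemma quad_ext0 (a : ℝ) (n : ℕ) (hn : 2 ≤ n) (y : Fin (n - 1) → ℝ) :
    (ext0 (n := n) y) ⬝ᵥ (((Fmat a n)ᵀ * Fmat a n) *ᵥ ext0 (n := n) y)
      = y ⬝ᵥ (Tmat a (n - 1) *ᵥ y) := by
  rw [quad_eq_range, quad_eq_range]
  rw [range_shrink (by omega : n - 1 ≤ n) _ _ (fun i hi => ext0_vanish y i hi)]
  refine Finset.sum_congr rfl fun i hi => Finset.sum_congr rfl fun j hj => ?_
  simp only [Finset.mem_range] at hi hj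
  rw [pad_ext0 (by omega), pad_ext0 (by omega)]
  congr 1
  congr 1
  rw [padA, dif_pos (⟨by omega, by omega⟩ : i < n ∧ j < n),
    padA, dif_pos (⟨hi, hj⟩ : i < n - 1 ∧ j < n - 1)]
  rw [ftf]
  rw [if_neg (show ¬(((⟨i, by omega⟩ : Fin n) : ℕ) = n - 1
      ∧ ((⟨j, by omega⟩ : Fin n) : ℕ) = n - 1) by
    simp only [Fin.val_mk]
    omega), sub_zero]
  simp only [Tmat, Fin.val_mk]


end S16

open S16 in
theorem statement16 (a : ℝ) (ha : 1 < a) (n : ℕ) (hn : 2 ≤ n)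
    (hM : ((Fmat a n)ᵀ * Fmat a n).IsHermitian)
    -- `μ` enumerates the eigenvalues of `FᵀF` in nondecreasing order
    (μ : Fin n → ℝ) (hμmono : Monotone μ)
    (hμeig : ∃ e : Equiv.Perm (Fin n), μ = hM.eigenvalues ∘ e) :
    -- for paper indices `i = 2, …, n` (here `k = i − 1 = 1, …, n − 1`):
    -- `ξ_{n−1,i−1} ≤ μ_{n,i} ≤ ξ_{n,i}`, and in particular
    -- `μ_{n,i} ∈ [(a−1)², (a+1)²]`
    ∀ k : Fin n, 1 ≤ (k : ℕ) →
      xiVal a (n - 1) (k : ℕ) ≤ μ k ∧ μ k ≤ xiVal a n ((k : ℕ) + 1) ∧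
        μ k ∈ Set.Icc ((a - 1) ^ 2) ((a + 1) ^ 2) := by
  obtain ⟨e, he⟩ := hμeig
  intro k hk
  have hkn := k.isLt
  have ha0 : 0 < a := by linarith
  set M := (Fmat a n)ᵀ * Fmat a n with hMdef
  set u : Fin n → (Fin n → ℝ) := fun i => ⇑(hM.eigenvectorBasis i) with hu
  have hueig : ∀ i, M *ᵥ u i = hM.eigenvalues i • u i := fun i =>
    hM.mulVec_eigenvectorBasis i
  have hudot : ∀ i j, u i ⬝ᵥ u j = if i = j then (1 : ℝ) else 0 := by
    intro i j
    have h := orthonormal_iff_ite.mp hM.eigenvectorBasis.orthonormal i j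
    rw [EuclideanSpace.inner_eq_star_dotProduct] at h
    simp only [hu]; rw [dotProduct_comm]
    simpa using h
  have hdotpos : ∀ x : Fin n → ℝ, x ≠ 0 → 0 < x ⬝ᵥ x := by
    intro x hx0
    have hnn : 0 ≤ x ⬝ᵥ x := by
      simp only [dotProduct]
      exact Finset.sum_nonneg fun t _ => mul_self_nonneg _
    exact lt_of_le_of_ne hnn (Ne.symm fun h => hx0 (dotProduct_self_eq_zero.mp h))
  -- upper bound
  have hub : μ k ≤ xiVal a n ((k : ℕ) + 1) := by
    set w1 : {j : Fin n // (k : ℕ) ≤ ((j : Fin n) : ℕ)} → (Fin n → ℝ) :=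
      fun j => u (e (j : Fin n)) with hw1
    set w2 : {j : Fin n // ((j : Fin n) : ℕ) ≤ (k : ℕ)} → (Fin n → ℝ) :=
      fun j => vvec n (j : Fin n) with hw2
    have hw1orth : ∀ i j, i ≠ j → w1 i ⬝ᵥ w1 j = 0 := by
      intro i j hij
      rw [hw1, hudot, if_neg]
      intro hcon
      exact hij (Subtype.ext (e.injective hcon))
    have hw1nz : ∀ i, w1 i ⬝ᵥ w1 i ≠ 0 := by
      intro i
      rw [hw1, hudot, if_pos rfl]
      norm_num
    have hw2orth : ∀ i j, i ≠ j → w2 i ⬝ᵥ w2 j = 0 := by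
      intro i j hij
      exact vvec_orth a ha0 n _ _ fun hcon => hij (Subtype.ext hcon)
    have hw2nz : ∀ i, w2 i ⬝ᵥ w2 i ≠ 0 := fun i => (vvec_selfdot_pos n _).ne'
    have hcard1 : Fintype.card {j : Fin n // (k : ℕ) ≤ ((j : Fin n) : ℕ)} = n - (k : ℕ) := by
      rw [Fintype.card_congr (equivIci n (k : ℕ))]
      exact Fintype.card_fin _
    have hcard2 : Fintype.card {j : Fin n // ((j : Fin n) : ℕ) ≤ (k : ℕ)} = (k : ℕ) + 1 := by
      rw [Fintype.card_congr (equivIic n (k : ℕ) hkn)]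
      exact Fintype.card_fin _
    obtain ⟨x, hxU, hxW, hx0⟩ := exists_inter (Submodule.span ℝ (Set.range w1))
      (Submodule.span ℝ (Set.range w2)) (by
        rw [finrank_span_orth w1 hw1orth hw1nz, finrank_span_orth w2 hw2orth hw2nz,
          hcard1, hcard2]
        omega)
    have hxx := hdotpos x hx0
    have h1 : μ k * (x ⬝ᵥ x) ≤ x ⬝ᵥ (M *ᵥ x) := by
      refine quad_ge M w1 (fun j => μ (j : Fin n)) (μ k) ?_ hw1orth ?_ x hxU
      · intro j
        rw [he]
        exact hueig (e (j : Fin n))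
      · intro j
        exact hμmono (Fin.le_def.mpr j.2)
    have h2 := quad_M_le_T a n (by omega) x
    have h3 : x ⬝ᵥ (Tmat a n *ᵥ x) ≤ xiVal a n ((k : ℕ) + 1) * (x ⬝ᵥ x) := by
      refine quad_le (Tmat a n) w2 (fun j => xiVal a n (((j : Fin n) : ℕ) + 1)) _
        (fun j => tmat_eigen a n (j : Fin n)) hw2orth ?_ x hxW
      intro j
      have hj2 := j.2
      exact xi_le a ha0 n _ _ (by omega) (by omega) (by omega)
    exact le_of_mul_le_mul_right (by linarith) hxx
  -- lower bound
  have hlb : xiVal a (n - 1) (k : ℕ) ≤ μ k := by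
    set w3 : {j : Fin (n - 1) // (k : ℕ) - 1 ≤ ((j : Fin (n - 1)) : ℕ)}
        → (Fin (n - 1) → ℝ) := fun j => vvec (n - 1) (j : Fin (n - 1)) with hw3
    set w3e : {j : Fin (n - 1) // (k : ℕ) - 1 ≤ ((j : Fin (n - 1)) : ℕ)}
        → (Fin n → ℝ) := fun j => ext0 (n := n) (w3 j) with hw3e
    set w4 : {j : Fin n // ((j : Fin n) : ℕ) ≤ (k : ℕ)} → (Fin n → ℝ) :=
      fun j => u (e (j : Fin n)) with hw4
    have hw3orth : ∀ i j, i ≠ j → w3 i ⬝ᵥ w3 j = 0 := by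
      intro i j hij
      exact vvec_orth a ha0 (n - 1) _ _ fun hcon => hij (Subtype.ext hcon)
    have hw3nz : ∀ i, w3 i ⬝ᵥ w3 i ≠ 0 := fun i => (vvec_selfdot_pos (n - 1) _).ne'
    have hw3eorth : ∀ i j, i ≠ j → w3e i ⬝ᵥ w3e j = 0 := by
      intro i j hij
      rw [hw3e]
      rw [dot_ext0 (by omega)]
      exact hw3orth i j hij
    have hw3enz : ∀ i, w3e i ⬝ᵥ w3e i ≠ 0 := by
      intro i
      rw [hw3e]
      rw [dot_ext0 (by omega)]
      exact hw3nz i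
    have hw4orth : ∀ i j, i ≠ j → w4 i ⬝ᵥ w4 j = 0 := by
      intro i j hij
      rw [hw4, hudot, if_neg]
      intro hcon
      exact hij (Subtype.ext (e.injective hcon))
    have hw4nz : ∀ i, w4 i ⬝ᵥ w4 i ≠ 0 := by
      intro i
      rw [hw4, hudot, if_pos rfl]
      norm_num
    have hcard3 : Fintype.card {j : Fin (n - 1) // (k : ℕ) - 1 ≤ ((j : Fin (n - 1)) : ℕ)}
        = (n - 1) - ((k : ℕ) - 1) := by
      rw [Fintype.card_congr (equivIci (n - 1) ((k : ℕ) - 1))]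
      exact Fintype.card_fin _
    have hcard4 : Fintype.card {j : Fin n // ((j : Fin n) : ℕ) ≤ (k : ℕ)} = (k : ℕ) + 1 := by
      rw [Fintype.card_congr (equivIic n (k : ℕ) hkn)]
      exact Fintype.card_fin _
    obtain ⟨x, hxW, hxU, hx0⟩ := exists_inter (Submodule.span ℝ (Set.range w3e))
      (Submodule.span ℝ (Set.range w4)) (by
        rw [finrank_span_orth w3e hw3eorth hw3enz, finrank_span_orth w4 hw4orth hw4nz,
          hcard3, hcard4]
        omega)
    have hxx := hdotpos x hx0
    obtain ⟨d, hd⟩ := (Submodule.mem_span_range_iff_exists_fun ℝ).1 hxW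
    set y : Fin (n - 1) → ℝ := ∑ j, d j • w3 j with hy
    have hxy : x = ext0 (n := n) y := by
      rw [hy, ext0_sum_smul, ← hd]
    have hymem : y ∈ Submodule.span ℝ (Set.range w3) := by
      rw [hy]
      exact Submodule.sum_mem _ fun j _ =>
        Submodule.smul_mem _ _ (Submodule.subset_span ⟨j, rfl⟩)
    have h1 : xiVal a (n - 1) (k : ℕ) * (y ⬝ᵥ y) ≤ y ⬝ᵥ (Tmat a (n - 1) *ᵥ y) := by
      refine quad_ge (Tmat a (n - 1)) w3
        (fun j => xiVal a (n - 1) (((j : Fin (n - 1)) : ℕ) + 1)) _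
        (fun j => tmat_eigen a (n - 1) (j : Fin (n - 1))) hw3orth ?_ y hymem
      intro j
      have hj2 := j.2
      have hjlt := (j : Fin (n - 1)).isLt
      exact xi_le a ha0 (n - 1) (k : ℕ) _ (by omega) (by omega) (by omega)
    have h2 : y ⬝ᵥ (Tmat a (n - 1) *ᵥ y) = x ⬝ᵥ (M *ᵥ x) := by
      rw [hxy]
      exact (quad_ext0 a n hn y).symm
    have h2b : y ⬝ᵥ y = x ⬝ᵥ x := by
      rw [hxy]
      exact (dot_ext0 (by omega) y y).symm
    have h3 : x ⬝ᵥ (M *ᵥ x) ≤ μ k * (x ⬝ᵥ x) := by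
      refine quad_le M w4 (fun j => μ (j : Fin n)) (μ k) ?_ hw4orth ?_ x hxU
      · intro j
        rw [he]
        exact hueig (e (j : Fin n))
      · intro j
        exact hμmono (Fin.le_def.mpr j.2)
    rw [h2b, h2] at h1
    exact le_of_mul_le_mul_right (by linarith) hxx
  refine ⟨hlb, hub, Set.mem_Icc.mpr ⟨?_, ?_⟩⟩
  · have hcos := Real.cos_le_one (((k : ℕ) : ℝ) * Real.pi / (((n - 1 : ℕ) : ℝ) + 1))
    have hx : (a - 1) ^ 2 ≤ xiVal a (n - 1) (k : ℕ) := by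
      simp only [xiVal]
      nlinarith [mul_le_mul_of_nonneg_left hcos ha0.le]
    linarith
  · have hcos := Real.neg_one_le_cos ((((k : ℕ) + 1 : ℕ) : ℝ) * Real.pi / (((n : ℕ) : ℝ) + 1))
    have hx : xiVal a n ((k : ℕ) + 1) ≤ (a + 1) ^ 2 := by
      simp only [xiVal]
      nlinarith [mul_le_mul_of_nonneg_left hcos ha0.le]
    linarith
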